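/- Carry-propagation shift lemma: let i < j be natural numbers and let x be a natural number such that Nat.testBit x k = false for all k with i < k ≤ j (all bits strictly between i and j, and bit j, are zero). Then ((x + (2^j - 2^i)) &&& 2^j) equals 2^j if bit i of x is 1, and equals 0 if bit i of x is 0. -/

import Mathlib

theorem stmt_4 (i j x : ℕ) (hij : i < j)
    (hz : ∀ k, i < k → k ≤ j → Nat.testBit x k = false) :
    (x + (2 ^ j - 2 ^ i)) &&& 2 ^ j = if Nat.testBit x i then 2 ^ j else 0 := by
  have hji : (2:ℕ)^i ≤ 2^j := Nat.pow_le_pow_right (by norm_num) hij.le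
  have hij2 : (2:ℕ)^(i+1) ≤ 2^j := Nat.pow_le_pow_right (by norm_num) hij
  have hip : (0:ℕ) < 2^i := Nat.pow_pos (by norm_num)
  have hjp : (0:ℕ) < 2^j := Nat.pow_pos (by norm_num)
  set b := x % 2^(j+1) with hb
  set a := x / 2^(j+1) with ha
  have hx : 2^(j+1) * a + b = x := Nat.div_add_mod x _
  -- b = x % 2^(i+1), hence b < 2^(i+1)
  have hbd : b = x % 2^(i+1) := by
    apply Nat.eq_of_testBit_eq
    intro k
    simp only [hb, Nat.testBit_mod_two_pow]
    rcases lt_or_ge k (i+1) with hk | hk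
    · simp [hk, show k < j+1 by omega]
    · rcases le_or_gt k j with hkj | hkj
      · simp [hz k (by omega) hkj]
      · simp [show ¬ k < j+1 by omega, show ¬ k < i+1 by omega]
  have hblt : b < 2^(i+1) := hbd ▸ Nat.mod_lt _ (Nat.pow_pos (by norm_num))
  have hbi : Nat.testBit x i = Nat.testBit b i := by
    rw [hb, Nat.testBit_mod_two_pow]
    simp [show i < j+1 by omega]
  rw [Nat.and_two_pow]
  suffices htb : Nat.testBit (x + (2^j - 2^i)) j = Nat.testBit x i by
    rw [htb]; cases Nat.testBit x i <;> simp
  have h2i : (2:ℕ)^(i+1) = 2^i + 2^i := by rw [pow_succ]; ring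
  have h2j : (2:ℕ)^(j+1) = 2^j + 2^j := by rw [pow_succ]; ring
  have hsum : x + (2^j - 2^i) = 2^j * (2*a) + (b + (2^j - 2^i)) := by
    rw [← hx, pow_succ]; ring
  rcases le_or_gt (2^i) b with hc | hc
  · -- bit i is set
    have hbi1 : b / 2^i = 1 := Nat.div_eq_of_lt_le (by omega) (by omega)
    have hbit : Nat.testBit b i = true := by
      rw [Nat.testBit_eq_decide_div_mod_eq, hbi1]; decide
    have hq : (b + (2^j - 2^i)) / 2^j = 1 := Nat.div_eq_of_lt_le (by omega) (by omega)
    rw [hbi, hbit, Nat.testBit_eq_decide_div_mod_eq, hsum,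
      Nat.mul_add_div hjp, hq]
    simp [Nat.add_mul_mod_self_left, Nat.mul_add_mod]
  · -- bit i is clear
    have hbit : Nat.testBit b i = false := Nat.testBit_eq_false_of_lt hc
    have hq : (b + (2^j - 2^i)) / 2^j = 0 := Nat.div_eq_of_lt (by omega)
    rw [hbi, hbit, Nat.testBit_eq_decide_div_mod_eq, hsum,
      Nat.mul_add_div hjp, hq]
    simp [Nat.mul_mod_right]
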